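/- The vector field A(ξ) = (1 + e^{−|ξ|²})ξ on ℝ^d is strongly monotone: there exists a constant c > 0 such that (A(ξ) − A(η)) · (ξ − η) ≥ c|ξ − η|² for all ξ, η ∈ ℝ^d. -/
import Mathlib

open RealInnerProductSpace

lemma exp_poly_le (x : ℝ) (hx : 0 ≤ x) :
    (6 + 6*x + 3*x^2 + x^3) * Real.exp (-x) ≤ 6 := by
  have h := Real.sum_le_exp_of_nonneg hx 4
  simp [Finset.sum_range_succ, Nat.factorial] at h
  have h6 : 6 + 6*x + 3*x^2 + x^3 ≤ 6 * Real.exp x := by nlinarith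
  have hpos : (0:ℝ) < Real.exp x := Real.exp_pos x
  rw [Real.exp_neg, mul_inv_le_iff₀' hpos]
  linarith

lemma key_ineq (a b : ℝ) (ha : 0 ≤ a) (hab : a ≤ b) :
    a * (Real.exp (-a^2) - Real.exp (-b^2)) ≤ 39/40 * (b - a) := by
  have hpa := exp_poly_le (a^2) (sq_nonneg a)
  have hD : (0:ℝ) < 6 + 6*a^2 + 3*(a^2)^2 + (a^2)^3 := by positivity
  have hea : (0:ℝ) < Real.exp (-a^2) := Real.exp_pos _
  have heb : (0:ℝ) < Real.exp (-b^2) := Real.exp_pos _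
  have hE : Real.exp (-a^2) ≤ 6 / (6 + 6*a^2 + 3*(a^2)^2 + (a^2)^3) := by
    rw [le_div_iff₀ hD]; linarith [hpa]
  rcases le_or_gt b (a + 1/2) with hb | hb
  · -- close case: use 1 - exp(a²-b²) ≤ b² - a²
    have h1 : 1 + (a^2 - b^2) ≤ Real.exp (a^2 - b^2) := by
      linarith [Real.add_one_le_exp (a^2 - b^2)]
    have h2 : Real.exp (-a^2) - Real.exp (-b^2) ≤ Real.exp (-a^2) * (b^2 - a^2) := by
      have : Real.exp (-b^2) = Real.exp (-a^2) * Real.exp (a^2 - b^2) := by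
        rw [← Real.exp_add]; ring_nf
      nlinarith [mul_le_mul_of_nonneg_left h1 hea.le]
    have h3 : a * (Real.exp (-a^2) - Real.exp (-b^2))
        ≤ (Real.exp (-a^2) * (a * (2*a + 1/2))) * (b - a) := by
      have hba : 0 ≤ b - a := by linarith
      nlinarith [mul_le_mul_of_nonneg_left h2 ha, mul_nonneg (mul_nonneg hea.le ha) hba]
    have h4 : Real.exp (-a^2) * (a * (2*a + 1/2)) ≤ 39/40 := by
      have hnn : 0 ≤ a * (2*a + 1/2) := by nlinarith
      have := mul_le_mul_of_nonneg_right hE hnn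
      refine this.trans ?_
      rw [div_mul_eq_mul_div, div_le_iff₀ hD]
      nlinarith [sq_nonneg (a - 1), sq_nonneg (a^2 - 1), sq_nonneg (a^3 - 1),
        sq_nonneg (a^2 - a), sq_nonneg (a^3 - a), sq_nonneg (a^3 - a^2), ha]
    have hba : 0 ≤ b - a := by linarith
    calc a * (Real.exp (-a^2) - Real.exp (-b^2))
        ≤ (Real.exp (-a^2) * (a * (2*a + 1/2))) * (b - a) := h3
      _ ≤ 39/40 * (b - a) := mul_le_mul_of_nonneg_right h4 hba
  · -- far case: a * exp(-a²) ≤ 39/80 ≤ 39/40 (b-a)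
    have h4 : a * Real.exp (-a^2) ≤ 39/80 := by
      have := mul_le_mul_of_nonneg_right hE ha
      have h5 : 6 / (6 + 6*a^2 + 3*(a^2)^2 + (a^2)^3) * a ≤ 39/80 := by
        rw [div_mul_eq_mul_div, div_le_iff₀ hD]
        nlinarith [sq_nonneg (a - 1), sq_nonneg (a^2 - 1), sq_nonneg (a^3 - 1), ha]
      nlinarith [this]
    nlinarith [mul_nonneg ha heb.le]

lemma aux_mono {d : ℕ} (ξ η : EuclideanSpace ℝ (Fin d)) (hab : ‖ξ‖ ≤ ‖η‖) :
    (1/40 : ℝ) * ‖ξ - η‖ ^ 2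
      ≤ ⟪(1 + Real.exp (-‖ξ‖ ^ 2)) • ξ - (1 + Real.exp (-‖η‖ ^ 2)) • η, ξ - η⟫ := by
  set a := ‖ξ‖ with haa
  set b := ‖η‖ with hbb
  set p := Real.exp (-a^2) with hp
  set q := Real.exp (-b^2) with hq
  have ha : 0 ≤ a := norm_nonneg ξ
  have hb : 0 ≤ b := norm_nonneg η
  have hkey := key_ineq a b ha hab
  have hpq : q ≤ p := by
    apply Real.exp_le_exp.mpr; nlinarith
  have hq0 : 0 < q := Real.exp_pos _
  have hCS : ⟪ξ, η⟫ ≤ a * b := real_inner_le_norm ξ η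
  have hexpand : ⟪(1 + p) • ξ - (1 + q) • η, ξ - η⟫
      = (1+p) * a^2 - (2+p+q) * ⟪ξ, η⟫ + (1+q) * b^2 := by
    simp only [inner_sub_left, inner_sub_right, real_inner_smul_left,
      real_inner_self_eq_norm_sq, real_inner_comm η ξ]
    ring
  have hnorm : ‖ξ - η‖^2 = a^2 - 2 * ⟪ξ, η⟫ + b^2 := by
    rw [norm_sub_sq_real]
  rw [hexpand, hnorm]
  nlinarith [hkey, hCS, sq_nonneg (a - b), sq_nonneg (b - a),
    mul_le_mul_of_nonneg_right hkey (show (0:ℝ) ≤ b - a by linarith),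
    mul_nonneg hq0.le (show (0:ℝ) ≤ a^2 - 2*⟪ξ,η⟫ + b^2 by nlinarith),
    mul_le_mul_of_nonneg_left hCS (show (0:ℝ) ≤ p - q by linarith)]

/-- The vector field `A(ξ) = (1 + e^{−|ξ|²})ξ` is strongly monotone:
`(A(ξ) − A(η)) · (ξ − η) ≥ c|ξ − η|²` for some `c > 0`. -/
theorem A_strongly_monotone (d : ℕ) :
    ∃ c > 0, ∀ ξ η : EuclideanSpace ℝ (Fin d),
      c * ‖ξ - η‖ ^ 2
        ≤ ⟪(1 + Real.exp (-‖ξ‖ ^ 2)) • ξ - (1 + Real.exp (-‖η‖ ^ 2)) • η, ξ - η⟫ := by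
  refine ⟨1/40, by norm_num, fun ξ η => ?_⟩
  rcases le_total ‖ξ‖ ‖η‖ with h | h
  · exact aux_mono ξ η h
  · have := aux_mono η ξ h
    have hsw : ⟪(1 + Real.exp (-‖η‖ ^ 2)) • η - (1 + Real.exp (-‖ξ‖ ^ 2)) • ξ, η - ξ⟫
        = ⟪(1 + Real.exp (-‖ξ‖ ^ 2)) • ξ - (1 + Real.exp (-‖η‖ ^ 2)) • η, ξ - η⟫ := by
      rw [show (1 + Real.exp (-‖η‖ ^ 2)) • η - (1 + Real.exp (-‖ξ‖ ^ 2)) • ξ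
          = -((1 + Real.exp (-‖ξ‖ ^ 2)) • ξ - (1 + Real.exp (-‖η‖ ^ 2)) • η) by abel,
        show η - ξ = -(ξ - η) by abel, inner_neg_neg]
    rw [norm_sub_rev η ξ, hsw] at this
    exact this
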